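/- (High-probability logarithmic iteration count for Gaussian signals.) Suppose δ_{2s}² + 2γ_{3s}² < 1 and let x be an s-sparse signal whose nonzero entries are i.i.d. standard Gaussian. Then for any η ∈ (0,1), with probability at least 1 − η, both x̂_s ≥ √(π/8)·η/s and ‖x‖₂² ≤ β·s/η for any β > 2η − (4η/s)ln(η/2); consequently x is recovered from y = Ax by NST+HT+FB in at most ⌈ 2 ln( √β √(8/π) (s/η)^{3/2} ) / ln((1-δ_{2s}²)/(2γ_{3s}²)) ⌉ iterations, which is O(ln(s/η)). -/

import Mathlib

open Matrix Finset Real MeasureTheory ProbabilityTheory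
open scoped BigOperators

noncomputable section

/-- squared Euclidean norm -/
def nsq {n : ℕ} (v : Fin n → ℝ) : ℝ := ∑ i, v i ^ 2

/-- Euclidean norm -/
def nrm {n : ℕ} (v : Fin n → ℝ) : ℝ := Real.sqrt (∑ i, v i ^ 2)

open Classical in
/-- support of a vector, as a finset -/
def suppF {n : ℕ} (x : Fin n → ℝ) : Finset (Fin n) :=
  Finset.univ.filter (fun i => x i ≠ 0)

/-- `x` is `s`-sparse -/
def Sparse {n : ℕ} (s : ℕ) (x : Fin n → ℝ) : Prop := (suppF x).card ≤ s

/-- `δ` is a restricted isometry constant of order `t` for `A`: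
`(1-δ)‖x‖² ≤ ‖Ax‖² ≤ (1+δ)‖x‖²` for all `t`-sparse `x`. -/
def IsRIP {M N : ℕ} (A : Matrix (Fin M) (Fin N) ℝ) (t : ℕ) (δ : ℝ) : Prop :=
  ∀ x : Fin N → ℝ, Sparse t x →
    (1 - δ) * nsq x ≤ nsq (A.mulVec x) ∧ nsq (A.mulVec x) ≤ (1 + δ) * nsq x

/-- restriction of a vector to an index set (zeroing entries outside it) -/
def restr {n : ℕ} (T : Finset (Fin n)) (x : Fin n → ℝ) : Fin n → ℝ :=
  fun i => if i ∈ T then x i else 0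

/-- submatrix of the columns of `A` indexed by `T` -/
def colSub {M N : ℕ} (A : Matrix (Fin M) (Fin N) ℝ) (T : Finset (Fin N)) :
    Matrix (Fin M) T ℝ :=
  fun i j => A i j.val

/-- the feedback step: `μ'_T = x_T + (A_Tᵀ A_T)⁻¹ A_Tᵀ A_{Tᶜ} x_{Tᶜ}`, `μ'_{Tᶜ} = 0`. -/
def feedback {M N : ℕ} (A : Matrix (Fin M) (Fin N) ℝ) (T : Finset (Fin N))
    (x : Fin N → ℝ) : Fin N → ℝ :=
  fun i => if h : i ∈ T then
    x i + ((((colSub A T)ᵀ * colSub A T)⁻¹ * (colSub A T)ᵀ).mulVec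
      (A.mulVec (restr Tᶜ x))) ⟨i, h⟩
  else 0

/-- `hatAbs x k` is the `k`-th largest absolute entry of `x` (1-based index). -/
def hatAbs {n : ℕ} (x : Fin n → ℝ) (k : ℕ) : ℝ :=
  if h : k - 1 < n then |x (Tuple.sort (fun i => -|x i|) ⟨k - 1, h⟩)| else 0

/-- `T` contains the indices of the `p` largest absolute entries of `x`. -/
def containsTop {n : ℕ} (x : Fin n → ℝ) (p : ℕ) (T : Finset (Fin n)) : Prop :=
  ∀ j : Fin n, (j : ℕ) < p → Tuple.sort (fun i => -|x i|) j ∈ T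

/-- The NST+HT+FB algorithm: `T k` is the set of the `s` largest absolute entries of the
feasible iterate `x^k`, `μ^k` is the thresholding-plus-feedback of `x^k` on `T k`, and
`x^{k+1} = μ^k + Aᵀ(AAᵀ)⁻¹(y - Aμ^k)` is the null space tuning step. -/
def NSTSpec {M N : ℕ} (A : Matrix (Fin M) (Fin N) ℝ) (y : Fin M → ℝ) (s : ℕ)
    (T : ℕ → Finset (Fin N)) (xs μ : ℕ → Fin N → ℝ) : Prop :=
  (∀ k, A.mulVec (xs k) = y) ∧
  (∀ k, (T k).card = s) ∧
  (∀ k, ∀ i ∈ T k, ∀ j ∉ T k, |xs k j| ≤ |xs k i|) ∧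
  (∀ k, μ k = feedback A (T k) (xs k)) ∧
  (∀ k, xs (k + 1) = μ k + (Aᵀ * (A * Aᵀ)⁻¹).mulVec (y - A.mulVec (μ k)))

/-- The adaptive AdptNST+HT+FB algorithm: identical to NST+HT+FB except that at step `k`
the index set `T k` consists of the `k` largest absolute entries of `x^k`. -/
def AdptSpec {M N : ℕ} (A : Matrix (Fin M) (Fin N) ℝ) (y : Fin M → ℝ)
    (T : ℕ → Finset (Fin N)) (xs μ : ℕ → Fin N → ℝ) : Prop :=
  (∀ k, A.mulVec (xs k) = y) ∧
  (∀ k, (T k).card = k) ∧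
  (∀ k, ∀ i ∈ T k, ∀ j ∉ T k, |xs k j| ≤ |xs k i|) ∧
  (∀ k, μ k = feedback A (T k) (xs k)) ∧
  (∀ k, xs (k + 1) = μ k + (Aᵀ * (A * Aᵀ)⁻¹).mulVec (y - A.mulVec (μ k)))

open scoped ComplexOrder in
/-- the square root of a positive semidefinite matrix, as defined in the older Mathlib
(removed since; restated here with its old definition) -/
def Matrix.PosSemidef.sqrt {n 𝕜 : Type*} [Fintype n] [RCLike 𝕜] [DecidableEq n]
    {A : Matrix n n 𝕜} (hA : A.PosSemidef) : Matrix n n 𝕜 :=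
  (hA.1.eigenvectorUnitary : Matrix n n 𝕜) *
    diagonal (fun i => ((Real.sqrt (hA.1.eigenvalues i) : ℝ) : 𝕜)) *
    (star hA.1.eigenvectorUnitary : Matrix n n 𝕜)


namespace S15
set_option linter.unusedVariables false
set_option linter.unusedTactic false



lemma nsq_nonneg {n : ℕ} (v : Fin n → ℝ) : 0 ≤ nsq v :=
  Finset.sum_nonneg fun i _ => sq_nonneg _

lemma nsq_eq_dot {n : ℕ} (v : Fin n → ℝ) : nsq v = v ⬝ᵥ v := by
  simp [nsq, dotProduct, sq]

lemma eq_zero_of_nsq {n : ℕ} {v : Fin n → ℝ} (h : nsq v = 0) : v = 0 := by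
  funext i
  have h2 := (Finset.sum_eq_zero_iff_of_nonneg (fun i _ => sq_nonneg (v i))).1 h i (Finset.mem_univ i)
  exact pow_eq_zero_iff two_ne_zero |>.1 h2

lemma cs {n : ℕ} (v w : Fin n → ℝ) : (v ⬝ᵥ w) ^ 2 ≤ nsq v * nsq w := by
  simpa [dotProduct, nsq] using Finset.sum_mul_sq_le_sq_mul_sq Finset.univ v w

lemma dot_comm {n : ℕ} (v w : Fin n → ℝ) : v ⬝ᵥ w = w ⬝ᵥ v := dotProduct_comm v w

lemma mulVec_dot {M N : ℕ} (A : Matrix (Fin M) (Fin N) ℝ) (u : Fin N → ℝ) (w : Fin M → ℝ) :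
    (A *ᵥ u) ⬝ᵥ w = u ⬝ᵥ (Aᵀ *ᵥ w) := by
  rw [Matrix.mulVec_transpose, dot_comm, dotProduct_mulVec, dot_comm]

/-- support characterization of sparsity -/
lemma sparse_of_subset {n t : ℕ} {Ω : Finset (Fin n)} {v : Fin n → ℝ}
    (hv : ∀ i ∉ Ω, v i = 0) (hc : Ω.card ≤ t) : Sparse t v := by
  refine le_trans (Finset.card_le_card ?_) hc
  intro i hi
  classical
  simp only [suppF, Finset.mem_filter] at hi
  by_contra hiΩ
  exact hi.2 (hv i hiΩ)

lemma nsq_sum_subset {n : ℕ} {Ω : Finset (Fin n)} {v : Fin n → ℝ}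
    (hv : ∀ i ∉ Ω, v i = 0) : nsq v = ∑ i ∈ Ω, v i ^ 2 := by
  rw [nsq]
  refine (Finset.sum_subset (Finset.subset_univ Ω) ?_).symm
  intro i _ hi; rw [hv i hi]; ring

lemma dot_sum_subset {n : ℕ} {Ω : Finset (Fin n)} {v : Fin n → ℝ} (w : Fin n → ℝ)
    (hv : ∀ i ∉ Ω, v i = 0) : v ⬝ᵥ w = ∑ i ∈ Ω, v i * w i := by
  rw [dotProduct]
  refine (Finset.sum_subset (Finset.subset_univ Ω) ?_).symm
  intro i _ hi; rw [hv i hi]; ring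

lemma restr_eq_zero {n : ℕ} {Ω : Finset (Fin n)} {v : Fin n → ℝ} {i : Fin n} (hi : i ∉ Ω) :
    restr Ω v i = 0 := by simp [restr, hi]

lemma restr_eq_of_mem {n : ℕ} {Ω : Finset (Fin n)} {v : Fin n → ℝ} {i : Fin n} (hi : i ∈ Ω) :
    restr Ω v i = v i := by simp [restr, hi]

lemma dot_restr {n : ℕ} (Ω : Finset (Fin n)) (v w : Fin n → ℝ) :
    (restr Ω v) ⬝ᵥ w = ∑ i ∈ Ω, v i * w i := by
  rw [dot_sum_subset w (fun i hi => restr_eq_zero hi)]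
  exact Finset.sum_congr rfl fun i hi => by rw [restr_eq_of_mem hi]

lemma nsq_restr {n : ℕ} (Ω : Finset (Fin n)) (v : Fin n → ℝ) :
    nsq (restr Ω v) = ∑ i ∈ Ω, v i ^ 2 := by
  rw [nsq_sum_subset (fun i hi => restr_eq_zero (v := v) hi)]
  exact Finset.sum_congr rfl fun i hi => by rw [restr_eq_of_mem hi]

lemma nsq_restr_le {n : ℕ} (Ω : Finset (Fin n)) (v : Fin n → ℝ) :
    nsq (restr Ω v) ≤ nsq v := by
  rw [nsq_restr, nsq]
  exact Finset.sum_le_sum_of_subset_of_nonneg (Finset.subset_univ Ω) fun i _ _ => sq_nonneg _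


section RIP
variable {M N : ℕ} {A : Matrix (Fin M) (Fin N) ℝ} {s : ℕ} {δ : ℝ}

/-- RIP two-sided bound as an absolute-value bound -/
lemma rip_abs (hA : IsRIP A (2*s) δ) {v : Fin N → ℝ} (hv : Sparse (2*s) v) :
    |nsq (A *ᵥ v) - nsq v| ≤ δ * nsq v := by
  obtain ⟨h1, h2⟩ := hA v hv
  rw [abs_le]
  constructor <;> nlinarith [nsq_nonneg v]

/-- polarization / cross-RIP bound, squared form -/
lemma rip_cross (hA : IsRIP A (2*s) δ) (hδ : 0 ≤ δ) {Ω : Finset (Fin N)}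
    (hΩ : Ω.card ≤ 2*s) {y z : Fin N → ℝ}
    (hy : ∀ i ∉ Ω, y i = 0) (hz : ∀ i ∉ Ω, z i = 0) :
    ((A *ᵥ y) ⬝ᵥ (A *ᵥ z) - y ⬝ᵥ z) ^ 2 ≤ δ ^ 2 * nsq y * nsq z := by
  -- first: scaled bound  2*|D c•y z| ≤ δ*(nsq (c•y) + nsq (c⁻¹•z)) for every c > 0
  have key : ∀ y' z' : Fin N → ℝ, (∀ i ∉ Ω, y' i = 0) → (∀ i ∉ Ω, z' i = 0) →
      2 * ((A *ᵥ y') ⬝ᵥ (A *ᵥ z') - y' ⬝ᵥ z') ≤ δ * (nsq y' + nsq z') := by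
    intro y' z' hy' hz'
    have hadd : Sparse (2*s) (y' + z') :=
      sparse_of_subset (fun i hi => by simp [hy' i hi, hz' i hi]) hΩ
    have hsub : Sparse (2*s) (y' - z') :=
      sparse_of_subset (fun i hi => by simp [hy' i hi, hz' i hi]) hΩ
    have e1 := rip_abs hA hadd
    have e2 := rip_abs hA hsub
    have q1 : nsq (A *ᵥ (y' + z')) - nsq (y' + z')
        = (nsq (A *ᵥ y') - nsq y') + (nsq (A *ᵥ z') - nsq z')
          + 2 * ((A *ᵥ y') ⬝ᵥ (A *ᵥ z') - y' ⬝ᵥ z') := by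
      simp only [Matrix.mulVec_add, nsq_eq_dot]
      simp only [add_dotProduct, dotProduct_add]
      rw [dot_comm (A *ᵥ z') (A *ᵥ y'), dot_comm z' y']
      ring
    have q2 : nsq (A *ᵥ (y' - z')) - nsq (y' - z')
        = (nsq (A *ᵥ y') - nsq y') + (nsq (A *ᵥ z') - nsq z')
          - 2 * ((A *ᵥ y') ⬝ᵥ (A *ᵥ z') - y' ⬝ᵥ z') := by
      simp only [Matrix.mulVec_sub, nsq_eq_dot]
      simp only [sub_dotProduct, dotProduct_sub]
      rw [dot_comm (A *ᵥ z') (A *ᵥ y'), dot_comm z' y']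
      ring
    have hyA : Sparse (2*s) y' := sparse_of_subset hy' hΩ
    have hzA : Sparse (2*s) z' := sparse_of_subset hz' hΩ
    have e3 := rip_abs hA hyA
    have e4 := rip_abs hA hzA
    have hnsq : nsq (y' + z') + nsq (y' - z') = 2 * (nsq y' + nsq z') := by
      simp only [nsq]
      rw [← Finset.sum_add_distrib]
      rw [show (2:ℝ) * (∑ i, y' i ^ 2 + ∑ i, z' i ^ 2) = ∑ i, 2*(y' i ^2 + z' i ^2) by
        rw [← Finset.sum_add_distrib, Finset.mul_sum]]
      refine Finset.sum_congr rfl fun i _ => by simp only [Pi.add_apply, Pi.sub_apply]; ring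
    have l1 : nsq (A *ᵥ (y' + z')) - nsq (y' + z') ≤ δ * nsq (y' + z') := (abs_le.1 e1).2
    have l2 : -(δ * nsq (y' - z')) ≤ nsq (A *ᵥ (y' - z')) - nsq (y' - z') := (abs_le.1 e2).1
    nlinarith [nsq_nonneg (y' + z'), nsq_nonneg (y' - z')]
  -- conclude with scaling
  by_cases hY : nsq y = 0
  · have : y = 0 := eq_zero_of_nsq hY
    subst this
    simp [nsq, Matrix.mulVec_zero]
  by_cases hZ : nsq z = 0
  · have : z = 0 := eq_zero_of_nsq hZ
    subst this
    simp [nsq, Matrix.mulVec_zero]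
  have hY' : 0 < nsq y := lt_of_le_of_ne (nsq_nonneg y) (Ne.symm hY)
  have hZ' : 0 < nsq z := lt_of_le_of_ne (nsq_nonneg z) (Ne.symm hZ)
  set c : ℝ := Real.sqrt (Real.sqrt (nsq z / nsq y)) with hc
  have hq : 0 < nsq z / nsq y := div_pos hZ' hY'
  have hc0 : 0 < c := Real.sqrt_pos.2 (Real.sqrt_pos.2 hq)
  have hc2 : c^2 * c^2 = nsq z / nsq y := by
    have h1 : c^2 = Real.sqrt (nsq z / nsq y) := Real.sq_sqrt (Real.sqrt_nonneg _)
    rw [h1]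
    exact Real.mul_self_sqrt hq.le
  -- apply key to c•y and c⁻¹•z
  have h1 := key (c • y) (c⁻¹ • z)
    (fun i hi => by simp [hy i hi]) (fun i hi => by simp [hz i hi])
  have h2 := key (c • (-y)) (c⁻¹ • z)
    (fun i hi => by simp [hy i hi]) (fun i hi => by simp [hz i hi])
  have hny : nsq (c • y) = c^2 * nsq y := by
    simp [nsq, Finset.mul_sum, mul_pow]
  have hnz : nsq (c⁻¹ • z) = (c⁻¹)^2 * nsq z := by
    simp [nsq, Finset.mul_sum, mul_pow]
  have hdot1 : (A *ᵥ (c • y)) ⬝ᵥ (A *ᵥ (c⁻¹ • z)) - (c • y) ⬝ᵥ (c⁻¹ • z)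
      = ((A *ᵥ y) ⬝ᵥ (A *ᵥ z) - y ⬝ᵥ z) * (c * c⁻¹) := by
    simp [Matrix.mulVec_smul, smul_dotProduct, dotProduct_smul, smul_eq_mul]
    ring
  have hdot2 : (A *ᵥ (c • (-y))) ⬝ᵥ (A *ᵥ (c⁻¹ • z)) - (c • (-y)) ⬝ᵥ (c⁻¹ • z)
      = -(((A *ᵥ y) ⬝ᵥ (A *ᵥ z) - y ⬝ᵥ z)) * (c * c⁻¹) := by
    simp [Matrix.mulVec_smul, smul_dotProduct, dotProduct_smul, smul_eq_mul,
      Matrix.mulVec_neg, neg_dotProduct, dotProduct_neg]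
    ring
  have hcc : c * c⁻¹ = 1 := mul_inv_cancel₀ hc0.ne'
  have hnny : nsq (c • (-y)) = c^2 * nsq y := by
    simp [nsq, Finset.mul_sum, mul_pow]
  rw [hdot1, hcc, mul_one, hny, hnz] at h1
  rw [hdot2, hcc, mul_one, hnny, hnz] at h2
  -- now 2*|D| ≤ δ*(c²Y + c⁻²Z) and c²Y = c⁻²Z = √(YZ)
  have hgeom : c^2 * nsq y = Real.sqrt (nsq y * nsq z) := by
    have hsq : nsq y * nsq z = (c^2 * nsq y)^2 := by
      have : (c^2 * nsq y)^2 = (c^2*c^2) * (nsq y * nsq y) := by ring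
      rw [this, hc2]; field_simp
    rw [hsq, Real.sqrt_sq (by positivity)]
  have hgeom2 : (c⁻¹)^2 * nsq z = Real.sqrt (nsq y * nsq z) := by
    have hinv : (c⁻¹)^2 * (c⁻¹)^2 = nsq y / nsq z := by
      rw [inv_pow, ← mul_inv, hc2, inv_div]
    have hsq : nsq y * nsq z = ((c⁻¹)^2 * nsq z)^2 := by
      have : ((c⁻¹)^2 * nsq z)^2 = ((c⁻¹)^2*(c⁻¹)^2) * (nsq z * nsq z) := by ring
      rw [this, hinv]; field_simp
    rw [hsq, Real.sqrt_sq (by positivity)]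
  have habs : |(A *ᵥ y) ⬝ᵥ (A *ᵥ z) - y ⬝ᵥ z| ≤ δ * Real.sqrt (nsq y * nsq z) := by
    rw [abs_le]
    constructor
    · nlinarith [h2, hgeom, hgeom2]
    · nlinarith [h1, hgeom, hgeom2]
  calc ((A *ᵥ y) ⬝ᵥ (A *ᵥ z) - y ⬝ᵥ z) ^ 2 = |(A *ᵥ y) ⬝ᵥ (A *ᵥ z) - y ⬝ᵥ z|^2 := (sq_abs _).symm
    _ ≤ (δ * Real.sqrt (nsq y * nsq z))^2 := by
        have h0 : (0:ℝ) ≤ |(A *ᵥ y) ⬝ᵥ (A *ᵥ z) - y ⬝ᵥ z| := abs_nonneg _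
        nlinarith
    _ = δ^2 * nsq y * nsq z := by
        rw [mul_pow, Real.sq_sqrt (by positivity)]
        ring
end RIP

lemma psd_sqrt_herm {n : Type*} [Fintype n] [DecidableEq n] {A : Matrix n n ℝ}
    (hA : A.PosSemidef) : (hA.sqrt)ᴴ = hA.sqrt := by
  unfold Matrix.PosSemidef.sqrt
  simp [Matrix.conjTranspose_mul, Matrix.mul_assoc, Matrix.star_eq_conjTranspose,
    Matrix.conjTranspose_eq_transpose_of_trivial]

lemma psd_sqrt_mul_self {n : Type*} [Fintype n] [DecidableEq n] {A : Matrix n n ℝ}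
    (hA : A.PosSemidef) : hA.sqrt * hA.sqrt = A := by
  unfold Matrix.PosSemidef.sqrt
  have hU : (star hA.1.eigenvectorUnitary : Matrix n n ℝ) * (hA.1.eigenvectorUnitary : Matrix n n ℝ)
      = 1 := Unitary.coe_star_mul_self _
  have hD : diagonal (fun i => (RCLike.ofReal (Real.sqrt (hA.1.eigenvalues i)) : ℝ)) *
      diagonal (fun i => (RCLike.ofReal (Real.sqrt (hA.1.eigenvalues i)) : ℝ))
      = diagonal (RCLike.ofReal ∘ hA.1.eigenvalues) := by
    rw [Matrix.diagonal_mul_diagonal]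
    congr 1
    funext i
    simp [Real.mul_self_sqrt (hA.eigenvalues_nonneg i)]
  conv_rhs => rw [hA.1.spectral_theorem]
  rw [Unitary.conjStarAlgAut_apply, ← hD]
  calc _ = (hA.1.eigenvectorUnitary : Matrix n n ℝ) *
        diagonal (fun i => (RCLike.ofReal (Real.sqrt (hA.1.eigenvalues i)) : ℝ)) *
        ((star hA.1.eigenvectorUnitary : Matrix n n ℝ) * (hA.1.eigenvectorUnitary : Matrix n n ℝ)) *
        diagonal (fun i => (RCLike.ofReal (Real.sqrt (hA.1.eigenvalues i)) : ℝ)) *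
        (star hA.1.eigenvectorUnitary : Matrix n n ℝ) := by simp only [Matrix.mul_assoc]
    _ = _ := by rw [hU, Matrix.mul_one]; simp only [Matrix.mul_assoc]

section Proj
variable {M N : ℕ} {A : Matrix (Fin M) (Fin N) ℝ}

/-- the orthogonal projection onto the row space -/
def Q (A : Matrix (Fin M) (Fin N) ℝ) : Matrix (Fin N) (Fin N) ℝ := Aᵀ * (A * Aᵀ)⁻¹ * A

lemma hunit (hpd : (A * Aᵀ).PosDef) : IsUnit (A * Aᵀ).det := hpd.det_pos.ne'.isUnit

lemma symm_inv : ((A * Aᵀ)⁻¹)ᵀ = (A * Aᵀ)⁻¹ := by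
  rw [Matrix.transpose_nonsing_inv]
  congr 1
  rw [Matrix.transpose_mul, Matrix.transpose_transpose]

lemma Q_symm : (Q A)ᵀ = Q A := by
  rw [Q, Matrix.transpose_mul, Matrix.transpose_mul, Matrix.transpose_transpose, symm_inv,
    Matrix.mul_assoc]

lemma Q_idem (hpd : (A * Aᵀ).PosDef) : Q A * Q A = Q A := by
  rw [Q]
  rw [show Aᵀ * (A * Aᵀ)⁻¹ * A * (Aᵀ * (A * Aᵀ)⁻¹ * A)
      = Aᵀ * (A * Aᵀ)⁻¹ * (A * Aᵀ * (A * Aᵀ)⁻¹) * A by simp only [Matrix.mul_assoc]]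
  rw [Matrix.mul_nonsing_inv _ (hunit hpd), Matrix.mul_one]

lemma Q_null {p : Fin N → ℝ} (hp : A *ᵥ p = 0) : Q A *ᵥ p = 0 := by
  rw [Q, ← Matrix.mulVec_mulVec, hp, Matrix.mulVec_zero]

lemma A_Q (hpd : (A * Aᵀ).PosDef) (v : Fin N → ℝ) : A *ᵥ (Q A *ᵥ v) = A *ᵥ v := by
  rw [Matrix.mulVec_mulVec, Q]
  rw [show A * (Aᵀ * (A * Aᵀ)⁻¹ * A) = A * Aᵀ * (A * Aᵀ)⁻¹ * A by simp only [Matrix.mul_assoc]]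
  rw [Matrix.mul_nonsing_inv _ (hunit hpd), Matrix.one_mul]

/-- B := sqrt((AAᵀ)⁻¹) * A satisfies Bᵀ * B = Q -/
lemma BtB (hpd : (A * Aᵀ).PosDef) :
    (hpd.inv.posSemidef.sqrt * A)ᵀ * (hpd.inv.posSemidef.sqrt * A) = Q A := by
  have hsymm : (hpd.inv.posSemidef.sqrt)ᵀ = hpd.inv.posSemidef.sqrt := by
    have h := psd_sqrt_herm hpd.inv.posSemidef
    rw [← Matrix.conjTranspose_eq_transpose_of_trivial, h]
  rw [Matrix.transpose_mul, hsymm, Q]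
  rw [show Aᵀ * hpd.inv.posSemidef.sqrt * (hpd.inv.posSemidef.sqrt * A)
      = Aᵀ * (hpd.inv.posSemidef.sqrt * hpd.inv.posSemidef.sqrt) * A by
        simp only [Matrix.mul_assoc]]
  rw [psd_sqrt_mul_self]

/-- key identity: ‖v − Qv‖² = ‖v‖² − ‖Bv‖² -/
lemma nsq_sub_Q (hpd : (A * Aᵀ).PosDef) (v : Fin N → ℝ) :
    nsq (v - Q A *ᵥ v) = nsq v - nsq ((hpd.inv.posSemidef.sqrt * A) *ᵥ v) := by
  have hB : nsq ((hpd.inv.posSemidef.sqrt * A) *ᵥ v) = v ⬝ᵥ (Q A *ᵥ v) := by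
    rw [nsq_eq_dot, mulVec_dot, Matrix.mulVec_mulVec, BtB hpd]
  have hQQ : (Q A *ᵥ v) ⬝ᵥ (Q A *ᵥ v) = v ⬝ᵥ (Q A *ᵥ v) := by
    rw [mulVec_dot, Q_symm, Matrix.mulVec_mulVec, Q_idem hpd]
  rw [nsq_eq_dot, nsq_eq_dot, hB]
  rw [sub_dotProduct, dotProduct_sub, dotProduct_sub, hQQ]
  rw [dot_comm (Q A *ᵥ v) v]
  ring
end Proj

section Feedback
variable {M N s : ℕ} {A : Matrix (Fin M) (Fin N) ℝ} {δ : ℝ}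

lemma mulVec_dot' {m n : Type*} [Fintype m] [Fintype n] (B : Matrix m n ℝ) (u : n → ℝ)
    (w : m → ℝ) : (B *ᵥ u) ⬝ᵥ w = u ⬝ᵥ (Bᵀ *ᵥ w) := by
  rw [Matrix.mulVec_transpose, dotProduct_comm, dotProduct_mulVec,
    dotProduct_comm]

/-- restriction decomposition -/
lemma restr_add_compl {T : Finset (Fin N)} (z : Fin N → ℝ) :
    restr T z + restr Tᶜ z = z := by
  funext i
  by_cases hi : i ∈ T
  · simp [restr, hi]
  · simp [restr, hi]

/-- A acting on a T-supported vector equals the column submatrix action -/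
lemma mulVec_restr (T : Finset (Fin N)) (z : Fin N → ℝ) :
    A *ᵥ (restr T z) = colSub A T *ᵥ (fun j : T => z j.val) := by
  funext i
  show ∑ j, A i j * restr T z j = ∑ j : T, colSub A T i j * z j.val
  have h1 : ∑ j : Fin N, A i j * restr T z j = ∑ j ∈ T, A i j * z j := by
    rw [← Finset.sum_subset (Finset.subset_univ T)
      (fun j _ hj => by rw [restr, if_neg hj, mul_zero])]
    exact Finset.sum_congr rfl fun j hj => by rw [restr, if_pos hj]
  rw [h1, ← Finset.sum_coe_sort T (fun j => A i j * z j)]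
  rfl

/-- the Gram matrix of a small column submatrix is positive definite -/
lemma gram_posdef (hA : IsRIP A (2*s) δ) (hδ1 : δ < 1) {T : Finset (Fin N)}
    (hT : T.card ≤ 2*s) : ((colSub A T)ᵀ * colSub A T).PosDef := by
  refine PosDef.of_dotProduct_mulVec_pos ?_ ?_
  · rw [Matrix.IsHermitian, Matrix.conjTranspose_eq_transpose_of_trivial,
      Matrix.transpose_mul, Matrix.transpose_transpose]
  · intro w hw
    classical
    set z : Fin N → ℝ := fun i => if h : i ∈ T then w ⟨i, h⟩ else 0 with hz
    have hz0 : ∀ i ∉ T, z i = 0 := fun i hi => by rw [hz]; simp [hi]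
    have hzr : restr T z = z := by
      funext i
      by_cases hi : i ∈ T
      · simp [restr, hi]
      · simp [restr, hi, hz0 i hi]
    have hAz : A *ᵥ z = colSub A T *ᵥ w := by
      rw [← hzr, mulVec_restr T z]
      congr 1
      funext j
      rw [hz]; simp [j.2]
    have hsp : Sparse (2*s) z := sparse_of_subset hz0 hT
    have hrip := (hA z hsp).1
    have hznz : z ≠ 0 := by
      intro hzz
      apply hw
      funext j
      have : z j.val = 0 := by rw [hzz]; rfl
      rw [hz] at this
      simpa [j.2] using this
    have hnsqz : 0 < nsq z := by
      rcases eq_or_lt_of_le (nsq_nonneg z) with h0 | h0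
      · exfalso
        apply hznz
        funext i
        have h2 := (Finset.sum_eq_zero_iff_of_nonneg (fun i _ => sq_nonneg (z i))).1 h0.symm i
          (Finset.mem_univ i)
        exact pow_eq_zero_iff two_ne_zero |>.1 h2
      · exact h0
    have hq : star w ⬝ᵥ (((colSub A T)ᵀ * colSub A T) *ᵥ w) = nsq (A *ᵥ z) := by
      have hstar : star w = w := by
        funext j; simp
      rw [hstar, ← Matrix.mulVec_mulVec, ← mulVec_dot', hAz, ← nsq_eq_dot]
    rw [hq]
    nlinarith

/-- orthogonality of the feedback residual to the selected columns -/
lemma feedback_orth (hA : IsRIP A (2*s) δ) (hδ1 : δ < 1) {T : Finset (Fin N)}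
    (hT : T.card ≤ 2*s) {xs x : Fin N → ℝ} (hy : A *ᵥ xs = A *ᵥ x) :
    ∀ i ∈ T, (Aᵀ *ᵥ (A *ᵥ (feedback A T xs - x))) i = 0 := by
  classical
  have hunit : IsUnit ((colSub A T)ᵀ * colSub A T).det :=
    (gram_posdef hA hδ1 hT).det_pos.ne'.isUnit
  set μ := feedback A T xs with hμ
  set w := A *ᵥ (restr Tᶜ xs) with hw
  have hμoff : ∀ i ∉ T, μ i = 0 := fun i hi => by rw [hμ]; simp [feedback, hi]
  have hμr : restr T μ = μ := by
    funext i
    by_cases hi : i ∈ T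
    · simp [restr, hi]
    · simp [restr, hi, hμoff i hi]
  have hμT : (fun j : T => μ j.val)
      = (fun j : T => xs j.val) + (((colSub A T)ᵀ * colSub A T)⁻¹ * (colSub A T)ᵀ) *ᵥ w := by
    funext j
    show μ j.val = xs j.val + ((((colSub A T)ᵀ * colSub A T)⁻¹ * (colSub A T)ᵀ) *ᵥ w) j
    rw [hμ]
    simp only [feedback, dif_pos j.2]
    rfl
  have hAμ : A *ᵥ μ = colSub A T *ᵥ
      ((fun j : T => xs j.val) + (((colSub A T)ᵀ * colSub A T)⁻¹ * (colSub A T)ᵀ) *ᵥ w) := by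
    conv_lhs => rw [← hμr]
    rw [mulVec_restr, hμT]
  have hCt : (colSub A T)ᵀ *ᵥ (A *ᵥ μ) = (colSub A T)ᵀ *ᵥ (A *ᵥ x) := by
    rw [hAμ, Matrix.mulVec_add, Matrix.mulVec_mulVec, Matrix.mulVec_add,
      Matrix.mulVec_mulVec, Matrix.mulVec_mulVec]
    have h1 : (colSub A T)ᵀ * (colSub A T * (((colSub A T)ᵀ * colSub A T)⁻¹ * (colSub A T)ᵀ))
        = (colSub A T)ᵀ := by
      rw [show (colSub A T)ᵀ * (colSub A T * (((colSub A T)ᵀ * colSub A T)⁻¹ * (colSub A T)ᵀ))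
          = ((colSub A T)ᵀ * colSub A T) * ((colSub A T)ᵀ * colSub A T)⁻¹ * (colSub A T)ᵀ by
        simp only [Matrix.mul_assoc]]
      rw [Matrix.mul_nonsing_inv _ hunit, Matrix.one_mul]
    rw [h1]
    have h2 : ((colSub A T)ᵀ * colSub A T) *ᵥ (fun j : T => xs j.val)
        = (colSub A T)ᵀ *ᵥ (A *ᵥ restr T xs) := by
      rw [mulVec_restr, Matrix.mulVec_mulVec]
    rw [h2, ← Matrix.mulVec_add, hw, ← Matrix.mulVec_add, restr_add_compl, hy]
  intro i hi
  have hfin : ((colSub A T)ᵀ *ᵥ (A *ᵥ (μ - x))) ⟨i, hi⟩ = 0 := by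
    rw [Matrix.mulVec_sub, Matrix.mulVec_sub, hCt]
    simp
  rw [← hfin]
  rfl

/-- exact recovery of the feedback step on the true support -/
lemma feedback_exact (hA : IsRIP A (2*s) δ) (hδ1 : δ < 1) {T : Finset (Fin N)}
    (hT : T.card ≤ 2*s) {xs x : Fin N → ℝ} (hy : A *ᵥ xs = A *ᵥ x)
    (hx : ∀ i ∉ T, x i = 0) : feedback A T xs = x := by
  classical
  have hunit : IsUnit ((colSub A T)ᵀ * colSub A T).det :=
    (gram_posdef hA hδ1 hT).det_pos.ne'.isUnit
  have hxr : restr T x = x := by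
    funext i
    by_cases hi : i ∈ T
    · simp [restr, hi]
    · simp [restr, hi, hx i hi]
  have hsplit : restr Tᶜ xs = xs - restr T xs := by
    funext i
    have h2 := congrFun (restr_add_compl (T := T) xs) i
    simp only [Pi.add_apply] at h2
    simp only [Pi.sub_apply]
    linarith
  have hwC : A *ᵥ (restr Tᶜ xs)
      = colSub A T *ᵥ ((fun j : T => x j.val) - (fun j : T => xs j.val)) := by
    rw [hsplit, Matrix.mulVec_sub, hy, Matrix.mulVec_sub, ← mulVec_restr, ← mulVec_restr, hxr]
  have hkey : (((colSub A T)ᵀ * colSub A T)⁻¹ * (colSub A T)ᵀ) *ᵥ (A *ᵥ (restr Tᶜ xs))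
      = (fun j : T => x j.val) - (fun j : T => xs j.val) := by
    rw [hwC, Matrix.mulVec_mulVec]
    rw [show ((colSub A T)ᵀ * colSub A T)⁻¹ * (colSub A T)ᵀ * colSub A T
        = ((colSub A T)ᵀ * colSub A T)⁻¹ * ((colSub A T)ᵀ * colSub A T) by
      rw [Matrix.mul_assoc]]
    rw [Matrix.nonsing_inv_mul _ hunit, Matrix.one_mulVec]
  funext i
  by_cases hi : i ∈ T
  · show (if h : i ∈ T then
      xs i + ((((colSub A T)ᵀ * colSub A T)⁻¹ * (colSub A T)ᵀ).mulVec
        (A.mulVec (restr Tᶜ xs))) ⟨i, h⟩ else 0) = x i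
    rw [dif_pos hi]
    have h2 := congrFun hkey ⟨i, hi⟩
    simp only [Pi.sub_apply] at h2
    rw [h2]
    ring
  · show (if h : i ∈ T then
      xs i + ((((colSub A T)ᵀ * colSub A T)⁻¹ * (colSub A T)ᵀ).mulVec
        (A.mulVec (restr Tᶜ xs))) ⟨i, h⟩ else 0) = x i
    rw [dif_neg hi, hx i hi]
end Feedback

section Contract
variable {M N s : ℕ} {A : Matrix (Fin M) (Fin N) ℝ} {δ γ : ℝ}

/-- h3 consequence: projection defect bound for sparse vectors -/
lemma proj_defect (hpd : (A * Aᵀ).PosDef)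
    (h3 : ∀ z : Fin N → ℝ, Sparse (3 * s) z →
      (1 - γ) * nsq z ≤ nsq ((hpd.inv.posSemidef.sqrt * A).mulVec z))
    {z : Fin N → ℝ} (hz : Sparse (3*s) z) :
    nsq (z - Q A *ᵥ z) ≤ γ * nsq z := by
  have h := h3 z hz
  rw [nsq_sub_Q hpd]
  have := nsq_nonneg z
  nlinarith

/-- restriction of a null vector is γ-small -/
lemma null_restr (hpd : (A * Aᵀ).PosDef)
    (h3 : ∀ z : Fin N → ℝ, Sparse (3 * s) z →
      (1 - γ) * nsq z ≤ nsq ((hpd.inv.posSemidef.sqrt * A).mulVec z))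
    (hγ : 0 ≤ γ) {n : Fin N → ℝ} (hn : A *ᵥ n = 0)
    {Ω : Finset (Fin N)} (hΩ : Ω.card ≤ 3*s) :
    nsq (restr Ω n) ≤ γ * nsq n := by
  set g := restr Ω n with hg
  have hgs : Sparse (3*s) g := sparse_of_subset (fun i hi => restr_eq_zero hi) hΩ
  have hg1 : nsq g = g ⬝ᵥ n := by
    rw [nsq_restr, hg, dot_restr]
    exact Finset.sum_congr rfl fun i _ => sq (n i) ▸ (by ring)
  have hQg : (Q A *ᵥ g) ⬝ᵥ n = 0 := by
    rw [mulVec_dot, Q_symm, Q_null hn, dotProduct_zero]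
  have hkey : nsq g = (g - Q A *ᵥ g) ⬝ᵥ n := by
    rw [sub_dotProduct, hQg, sub_zero, hg1]
  have hsq : (nsq g)^2 ≤ nsq (g - Q A *ᵥ g) * nsq n := by
    rw [hkey]; exact cs _ _
  have hdef : nsq (g - Q A *ᵥ g) ≤ γ * nsq g := proj_defect hpd h3 hgs
  rcases eq_or_lt_of_le (nsq_nonneg g) with h0 | h0
  · rw [← h0]; exact mul_nonneg hγ (nsq_nonneg n)
  · have h1 : (nsq g)^2 ≤ γ * nsq g * nsq n := le_trans hsq (by nlinarith [nsq_nonneg n])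
    nlinarith

/-- core contraction inequality -/
lemma core (hA : IsRIP A (2*s) δ) (hδ0 : 0 ≤ δ)
    {Ω T : Finset (Fin N)} (hΩ : Ω.card ≤ 2*s) {v : Fin N → ℝ}
    (hv : ∀ i ∉ Ω, v i = 0) (hT : ∀ i ∈ T, (Aᵀ *ᵥ (A *ᵥ v)) i = 0) :
    (1 - δ^2) * nsq v ≤ ∑ i ∈ Finset.univ \ T, v i ^ 2 := by
  classical
  set r := restr Ω (Aᵀ *ᵥ (A *ᵥ v)) with hrdef
  set u : Fin N → ℝ := fun i => if i ∈ T then 0 else v i with hudef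
  have hrT : ∀ i ∈ T, r i = 0 := by
    intro i hi
    by_cases hiΩ : i ∈ Ω
    · rw [hrdef, restr_eq_of_mem hiΩ]; exact hT i hi
    · exact restr_eq_zero hiΩ
  set W := nsq (A *ᵥ v) with hWdef
  have hW1 : W = v ⬝ᵥ r := by
    rw [hWdef, nsq_eq_dot, mulVec_dot, dot_sum_subset _ hv, dot_sum_subset r hv]
    exact Finset.sum_congr rfl fun i hi => by rw [hrdef, restr_eq_of_mem hi]
  have hWu : W = u ⬝ᵥ r := by
    rw [hW1, dotProduct, dotProduct]
    refine Finset.sum_congr rfl fun i _ => ?_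
    by_cases hi : i ∈ T
    · rw [hrT i hi]; ring
    · rw [hudef]; simp [hi]
  set q : Fin N → ℝ := r - v with hqdef
  have hq0 : ∀ i ∉ Ω, q i = 0 := fun i hi => by
    rw [hqdef]
    show restr Ω (Aᵀ *ᵥ (A *ᵥ v)) i - v i = 0
    rw [restr_eq_zero hi, hv i hi, sub_zero]
  have hqr : q ⬝ᵥ r = (A *ᵥ q) ⬝ᵥ (A *ᵥ v) := by
    rw [mulVec_dot, dot_sum_subset _ hq0, dot_sum_subset (Aᵀ *ᵥ (A *ᵥ v)) hq0]
    exact Finset.sum_congr rfl fun i hi => by rw [hrdef, restr_eq_of_mem hi]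
  have hnsqq : nsq q = (A *ᵥ q) ⬝ᵥ (A *ᵥ v) - q ⬝ᵥ v := by
    rw [nsq_eq_dot, hqdef]
    rw [dotProduct_sub]
    rw [← hqdef, hqr, hqdef]
  have hq2 : nsq q ≤ δ^2 * nsq v := by
    have h := rip_cross hA hδ0 hΩ hq0 hv
    rw [← hnsqq] at h
    rcases eq_or_lt_of_le (nsq_nonneg q) with h0 | h0
    · rw [← h0]; nlinarith [nsq_nonneg v, sq_nonneg δ]
    · nlinarith
  have hexp : nsq r = nsq q + 2*W - nsq v := by
    have e1 : q ⬝ᵥ v = W - nsq v := by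
      rw [hqdef, sub_dotProduct, ← nsq_eq_dot, dot_comm r v, ← hW1]
    have h2 : nsq r = nsq q + 2*(q ⬝ᵥ v) + nsq v := by
      simp only [nsq, dotProduct, Finset.mul_sum, ← Finset.sum_add_distrib]
      refine Finset.sum_congr rfl fun i _ => ?_
      have hri : r i = q i + v i := by rw [hqdef]; simp [Pi.sub_apply]
      rw [hri]; ring
    rw [h2, e1]; ring
  have hstar : nsq r + (1-δ^2) * nsq v ≤ 2*W := by nlinarith
  have hcs2 : W^2 ≤ nsq u * nsq r := by rw [hWu]; exact cs u r
  have hW0 : 0 ≤ W := nsq_nonneg _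
  have hR0 : 0 ≤ nsq r := nsq_nonneg _
  have hV0 : 0 ≤ nsq v := nsq_nonneg _
  have hU0 : 0 ≤ nsq u := nsq_nonneg _
  have huT : nsq u = ∑ i ∈ Finset.univ \ T, v i ^ 2 := by
    rw [nsq]
    rw [← Finset.sum_subset (Finset.subset_univ (Finset.univ \ T))]
    · refine Finset.sum_congr rfl fun i hi => ?_
      rw [hudef]
      simp only [Finset.mem_sdiff] at hi
      simp [hi.2]
    · intro i _ hi
      simp only [Finset.mem_sdiff, Finset.mem_univ, true_and, not_not] at hi
      rw [hudef]; simp [hi]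
  rw [← huT]
  rcases eq_or_lt_of_le hR0 with hR | hR
  · -- r = 0 case
    have hWz : W = 0 := by nlinarith
    nlinarith
  · nlinarith [sq_nonneg (nsq r - (1-δ^2) * nsq v), sq_nonneg (nsq r + (1-δ^2) * nsq v)]
end Contract

section Determ
variable {M N s : ℕ} {A : Matrix (Fin M) (Fin N) ℝ} {δ γ : ℝ}

/-- the pairing estimate: mass of the true signal off the new support is controlled by
the feasible error on the symmetric difference -/
lemma pairing {T' S : Finset (Fin N)} (hc : S.card = T'.card) {x p xs' : Fin N → ℝ}
    (hx : ∀ i ∉ S, x i = 0) (hp : ∀ i, p i = xs' i - x i)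
    (htop : ∀ i ∈ T', ∀ j ∉ T', |xs' j| ≤ |xs' i|) :
    nsq (restr T'ᶜ x) ≤ 2 * nsq (restr ((S \ T') ∪ (T' \ S)) p) := by
  classical
  have hcc : (S \ T').card = (T' \ S).card := by
    have h1 := Finset.card_sdiff_add_card_inter S T'
    have h2 := Finset.card_sdiff_add_card_inter T' S
    rw [Finset.inter_comm] at h2
    omega
  have e := Finset.equivOfCardEq hcc
  have he : ∀ j : (S \ T' : Finset (Fin N)), (e j : Fin N) ∈ T' \ S := fun j => (e j).2
  -- left side equals sum over S \ T'
  have hL : nsq (restr T'ᶜ x) = ∑ j ∈ S \ T', x j ^ 2 := by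
    rw [nsq_restr]
    rw [← Finset.sum_subset (show S \ T' ⊆ T'ᶜ by
      intro j hj
      rw [Finset.mem_compl]
      exact (Finset.mem_sdiff.1 hj).2)]
    intro j hjc hj
    have hjS : j ∉ S := by
      by_contra hjS
      exact hj (Finset.mem_sdiff.2 ⟨hjS, Finset.mem_compl.1 hjc⟩)
    rw [hx j hjS]
    ring
  have hdisj : Disjoint (S \ T') (T' \ S) := by
    rw [Finset.disjoint_left]
    intro a ha hb
    exact (Finset.mem_sdiff.1 ha).2 (Finset.mem_sdiff.1 hb).1
  have key : ∀ j : (S \ T' : Finset (Fin N)), x j.val ^ 2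
      ≤ 2 * p j.val ^ 2 + 2 * p (e j).val ^ 2 := by
    intro j
    have hjT : j.val ∉ T' := (Finset.mem_sdiff.1 j.2).2
    have hiT : (e j).val ∈ T' := (Finset.mem_sdiff.1 (e j).2).1
    have hiS : (e j).val ∉ S := (Finset.mem_sdiff.1 (e j).2).2
    have h1 : |xs' j.val| ≤ |xs' (e j).val| := htop _ hiT _ hjT
    have h2 : p (e j).val = xs' (e j).val := by rw [hp, hx _ hiS, sub_zero]
    have h3 : x j.val = xs' j.val - p j.val := by rw [hp]; ring
    have h4 : xs' j.val ^ 2 ≤ xs' (e j).val ^ 2 := by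
      rw [← sq_abs (xs' j.val), ← sq_abs (xs' (e j).val)]
      exact pow_le_pow_left₀ (abs_nonneg _) h1 2
    rw [h3, h2]
    nlinarith [sq_nonneg (xs' j.val + p j.val)]
  calc nsq (restr T'ᶜ x) = ∑ j ∈ S \ T', x j ^ 2 := hL
    _ = ∑ j : (S \ T' : Finset (Fin N)), x j.val ^ 2 := (Finset.sum_coe_sort _ _).symm
    _ ≤ ∑ j : (S \ T' : Finset (Fin N)), (2 * p j.val ^ 2 + 2 * p (e j).val ^ 2) :=
        Finset.sum_le_sum (fun j _ => key j)
    _ = 2 * (∑ j : (S \ T' : Finset (Fin N)), p j.val ^ 2)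
        + 2 * (∑ j : (S \ T' : Finset (Fin N)), p (e j).val ^ 2) := by
        rw [Finset.sum_add_distrib, Finset.mul_sum, Finset.mul_sum]
    _ = 2 * (∑ j ∈ S \ T', p j ^ 2) + 2 * (∑ i ∈ T' \ S, p i ^ 2) := by
        rw [Finset.sum_coe_sort (S \ T') (fun j => p j ^ 2)]
        rw [show (∑ j : (S \ T' : Finset (Fin N)), p (e j).val ^ 2)
          = ∑ i : (T' \ S : Finset (Fin N)), p i.val ^ 2 from
            Equiv.sum_comp e (fun i => p i.val ^ 2)]
        rw [Finset.sum_coe_sort (T' \ S) (fun j => p j ^ 2)]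
    _ = 2 * nsq (restr ((S \ T') ∪ (T' \ S)) p) := by
        rw [nsq_restr, Finset.sum_union hdisj]
        ring

/-- one-step contraction of the off-support mass -/
lemma step_contract (hpd : (A * Aᵀ).PosDef) (hA : IsRIP A (2*s) δ) (hδ0 : 0 ≤ δ)
    (hδ1 : δ^2 < 1)
    (h3 : ∀ z : Fin N → ℝ, Sparse (3 * s) z →
      (1 - γ) * nsq z ≤ nsq ((hpd.inv.posSemidef.sqrt * A).mulVec z))
    (hγ0 : 0 < γ)
    {S : Finset (Fin N)} (hS : S.card = s) {x : Fin N → ℝ} (hx : ∀ i ∉ S, x i = 0)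
    {T : ℕ → Finset (Fin N)} {xs μ : ℕ → Fin N → ℝ}
    (hspec : NSTSpec A (A.mulVec x) s T xs μ) (k : ℕ) :
    (1 - δ^2) * nsq (restr (T (k+1))ᶜ x) ≤ (2*γ^2) * nsq (restr (T k)ᶜ x) := by
  classical
  obtain ⟨hfeas, hcardT, htop, hfb, hnst⟩ := hspec
  have hδlt : δ < 1 := by nlinarith
  set v : Fin N → ℝ := μ k - x with hvdef
  have hμk : μ k = feedback A (T k) (xs k) := hfb k
  have hTc : (T k).card ≤ 2*s := by rw [hcardT k]; omega
  have horth : ∀ i ∈ T k, (Aᵀ *ᵥ (A *ᵥ v)) i = 0 := by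
    rw [hvdef, hμk]
    exact feedback_orth hA hδlt hTc (hfeas k)
  have hΩc : (T k ∪ S).card ≤ 2*s := by
    calc (T k ∪ S).card ≤ (T k).card + S.card := Finset.card_union_le _ _
      _ ≤ 2*s := by rw [hcardT k, hS]; omega
  have hvsupp : ∀ i ∉ T k ∪ S, v i = 0 := by
    intro i hi
    rw [Finset.mem_union] at hi
    push_neg at hi
    rw [hvdef]
    simp only [Pi.sub_apply]
    rw [hμk]
    simp only [feedback, dif_neg hi.1]
    rw [hx i hi.2]
    ring
  have hcore := core (s := s) hA hδ0 hΩc hvsupp horth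
  have huv : ∑ i ∈ Finset.univ \ T k, v i ^ 2 = nsq (restr (T k)ᶜ x) := by
    rw [nsq_restr, ← Finset.compl_eq_univ_sdiff]
    refine Finset.sum_congr rfl fun i hi => ?_
    rw [Finset.mem_compl] at hi
    rw [hvdef]
    simp only [Pi.sub_apply]
    rw [hμk]
    simp only [feedback, dif_neg hi]
    ring
  set p : Fin N → ℝ := xs (k+1) - x with hpdef
  have hAp : A *ᵥ p = 0 := by
    rw [hpdef, Matrix.mulVec_sub, hfeas (k+1), sub_self]
  have hpv : p = v - Q A *ᵥ v := by
    rw [hpdef, hnst k]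
    have h1 : A.mulVec x - A.mulVec (μ k) = -(A *ᵥ v) := by
      rw [hvdef, Matrix.mulVec_sub]
      abel
    rw [h1, Matrix.mulVec_neg, Matrix.mulVec_mulVec]
    show μ k + -(Q A *ᵥ v) - x = v - Q A *ᵥ v
    rw [hvdef]
    abel
  have hsv : Sparse (3*s) v := sparse_of_subset hvsupp (le_trans hΩc (by omega))
  have h6 : nsq p ≤ γ * nsq v := by
    rw [hpv]
    exact proj_defect (s := s) hpd h3 hsv
  have hΩ'c : ((S \ T (k+1)) ∪ (T (k+1) \ S)).card ≤ 3*s := by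
    calc ((S \ T (k+1)) ∪ (T (k+1) \ S)).card
        ≤ (S \ T (k+1)).card + (T (k+1) \ S).card := Finset.card_union_le _ _
      _ ≤ S.card + (T (k+1)).card := by
          have h1 : (S \ T (k+1)).card ≤ S.card := Finset.card_le_card (Finset.sdiff_subset)
          have h2 : (T (k+1) \ S).card ≤ (T (k+1)).card :=
            Finset.card_le_card (Finset.sdiff_subset)
          omega
      _ ≤ 3*s := by rw [hcardT (k+1), hS]; omega
  have h7 : nsq (restr ((S \ T (k+1)) ∪ (T (k+1) \ S)) p) ≤ γ * nsq p :=
    null_restr (s := s) hpd h3 hγ0.le hAp hΩ'c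
  have h8 : nsq (restr (T (k+1))ᶜ x) ≤ 2 * nsq (restr ((S \ T (k+1)) ∪ (T (k+1) \ S)) p) :=
    pairing (by rw [hS, hcardT (k+1)]) hx (fun i => by rw [hpdef]; simp) (htop (k+1))
  have hnv := nsq_nonneg v
  have hnp := nsq_nonneg p
  have hc : 0 < 1 - δ^2 := by linarith
  rw [huv] at hcore
  calc (1-δ^2) * nsq (restr (T (k+1))ᶜ x)
      ≤ (1-δ^2) * (2 * nsq (restr ((S \ T (k+1)) ∪ (T (k+1) \ S)) p)) :=
        mul_le_mul_of_nonneg_left h8 hc.le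
    _ ≤ (1-δ^2) * (2 * (γ * nsq p)) := by nlinarith [mul_le_mul_of_nonneg_left h7 hc.le]
    _ ≤ (1-δ^2) * (2 * (γ * (γ * nsq v))) := by nlinarith [mul_le_mul_of_nonneg_left h6 (mul_nonneg hc.le hγ0.le)]
    _ = 2*γ^2 * ((1-δ^2) * nsq v) := by ring
    _ ≤ 2*γ^2 * nsq (restr (T k)ᶜ x) := mul_le_mul_of_nonneg_left hcore (by positivity)

/-- iterated contraction -/
lemma iterate_contract (hpd : (A * Aᵀ).PosDef) (hA : IsRIP A (2*s) δ) (hδ0 : 0 ≤ δ)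
    (hδ1 : δ^2 < 1)
    (h3 : ∀ z : Fin N → ℝ, Sparse (3 * s) z →
      (1 - γ) * nsq z ≤ nsq ((hpd.inv.posSemidef.sqrt * A).mulVec z))
    (hγ0 : 0 < γ)
    {S : Finset (Fin N)} (hS : S.card = s) {x : Fin N → ℝ} (hx : ∀ i ∉ S, x i = 0)
    {T : ℕ → Finset (Fin N)} {xs μ : ℕ → Fin N → ℝ}
    (hspec : NSTSpec A (A.mulVec x) s T xs μ) (k : ℕ) :
    nsq (restr (T k)ᶜ x) ≤ ((2*γ^2)/(1-δ^2))^k * nsq x := by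
  induction k with
  | zero => simpa using nsq_restr_le _ x
  | succ k ih =>
    have hstep := step_contract hpd hA hδ0 hδ1 h3 hγ0 hS hx hspec k
    have hc : 0 < 1 - δ^2 := by linarith
    have h1 : nsq (restr (T (k+1))ᶜ x) ≤ (2*γ^2)/(1-δ^2) * nsq (restr (T k)ᶜ x) := by
      rw [div_mul_eq_mul_div, le_div_iff₀ hc]
      nlinarith
    calc nsq (restr (T (k+1))ᶜ x) ≤ (2*γ^2)/(1-δ^2) * nsq (restr (T k)ᶜ x) := h1
      _ ≤ (2*γ^2)/(1-δ^2) * (((2*γ^2)/(1-δ^2))^k * nsq x) := by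
          have hρ0 : 0 ≤ (2*γ^2)/(1-δ^2) := by positivity
          exact mul_le_mul_of_nonneg_left ih hρ0
      _ = ((2*γ^2)/(1-δ^2))^(k+1) * nsq x := by ring

/-- deterministic recovery -/
lemma recovery (hpd : (A * Aᵀ).PosDef) (hA : IsRIP A (2*s) δ) (hδ0 : 0 ≤ δ)
    (hδ1 : δ^2 < 1)
    (h3 : ∀ z : Fin N → ℝ, Sparse (3 * s) z →
      (1 - γ) * nsq z ≤ nsq ((hpd.inv.posSemidef.sqrt * A).mulVec z))
    (hγ0 : 0 < γ)
    {S : Finset (Fin N)} (hS : S.card = s) {x : Fin N → ℝ} (hx : ∀ i ∉ S, x i = 0)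
    {T : ℕ → Finset (Fin N)} {xs μ : ℕ → Fin N → ℝ}
    (hspec : NSTSpec A (A.mulVec x) s T xs μ)
    {a b : ℝ} (ha : 0 < a) (hax : ∀ i ∈ S, a ≤ |x i|) (hb : nsq x < b)
    {K : ℕ} (hK : ((2*γ^2)/(1-δ^2))^K * b ≤ a^2) : μ K = x := by
  classical
  have hc : 0 < 1 - δ^2 := by linarith
  have hρpos : 0 < (2*γ^2)/(1-δ^2) := by positivity
  have h1 : nsq (restr (T K)ᶜ x) < a^2 := by
    calc nsq (restr (T K)ᶜ x) ≤ ((2*γ^2)/(1-δ^2))^K * nsq x :=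
        iterate_contract hpd hA hδ0 hδ1 h3 hγ0 hS hx hspec K
      _ < ((2*γ^2)/(1-δ^2))^K * b := by
          exact mul_lt_mul_of_pos_left hb (pow_pos hρpos K)
      _ ≤ a^2 := hK
  have hsub : S ⊆ T K := by
    by_contra hns
    obtain ⟨j, hjS, hjT⟩ := Finset.not_subset.1 hns
    have h2 : a^2 ≤ x j ^ 2 := by
      have := hax j hjS
      calc a^2 ≤ |x j|^2 := by nlinarith [abs_nonneg (x j)]
        _ = x j ^ 2 := sq_abs _
    have h3' : x j ^ 2 ≤ nsq (restr (T K)ᶜ x) := by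
      rw [nsq_restr]
      exact Finset.single_le_sum (fun i _ => sq_nonneg (x i)) (Finset.mem_compl.2 hjT)
    linarith
  obtain ⟨hfeas, hcardT, htop2, hfb, hnst⟩ := hspec
  have hTS : T K = S := (Finset.eq_of_subset_of_card_le hsub (by rw [hcardT K, hS])).symm
  have hδlt : δ < 1 := by nlinarith
  rw [hfb K, hTS]
  exact feedback_exact hA hδlt (by rw [hS]; omega) (hfeas K) (by rw [← hTS] at hx ⊢; exact hx)
end Determ

lemma hatAbs_ge {n : ℕ} {x : Fin n → ℝ} {a : ℝ} {s : ℕ} (hs : 0 < s) (hsn : s ≤ n)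
    (h : s ≤ (Finset.univ.filter (fun i => a ≤ |x i|)).card) : a ≤ hatAbs x s := by
  classical
  set f : Fin n → ℝ := fun i => -|x i| with hf
  set σ := Tuple.sort f with hσ
  have hlt : s - 1 < n := by omega
  rw [hatAbs, dif_pos hlt]
  have hgoal : f (σ ⟨s-1, hlt⟩) ≤ -a → a ≤ |x (σ ⟨s-1, hlt⟩)| := by
    intro hh
    rw [hf] at hh
    simp only at hh
    linarith
  apply hgoal
  by_contra hcon
  push_neg at hcon
  set B := Finset.univ.filter (fun j : Fin n => f (σ j) ≤ -a) with hB
  have hcard : (Finset.univ.filter (fun i => a ≤ |x i|)).card = B.card := by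
    have himg : Finset.univ.filter (fun i : Fin n => a ≤ |x i|) = B.image σ := by
      ext i
      simp only [Finset.mem_filter, Finset.mem_univ, true_and, Finset.mem_image, hB]
      constructor
      · intro hi
        exact ⟨σ.symm i, by simp [hf, hi], by simp⟩
      · rintro ⟨j, hj, rfl⟩
        simp only [hf] at hj
        linarith
    rw [himg, Finset.card_image_of_injective _ σ.injective]
  have hmem : ∀ j ∈ B, (j : Fin n).val ∈ Finset.range (s-1) := by
    intro j hj
    rw [hB, Finset.mem_filter] at hj
    rw [Finset.mem_range]
    by_contra hge
    push_neg at hge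
    have hle : (⟨s-1, hlt⟩ : Fin n) ≤ j := by
      rw [Fin.le_def]
      exact hge
    have hmono := Tuple.monotone_sort f hle
    simp only [Function.comp] at hmono
    rw [← hσ] at hmono
    have := hj.2
    linarith
  have hBle : B.card ≤ s - 1 := by
    calc B.card ≤ (Finset.range (s-1)).card :=
        Finset.card_le_card_of_injOn Fin.val hmem
          (fun p _ q _ hpq => Fin.val_injective hpq)
      _ = s - 1 := Finset.card_range _
  omega

lemma Kpow_le {δ γ η β : ℝ} {s : ℕ} (hs : 0 < s) (hη : 0 < η)
    (hβ2 : 0 < β) (hδ0 : 0 ≤ δ) (hγ0 : 0 < γ) (hcond : δ^2 + 2*γ^2 < 1) :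
    ((2*γ^2)/(1-δ^2))^(⌈2 * Real.log (Real.sqrt β * Real.sqrt (8/π)
        * ((s:ℝ)/η) ^ ((3:ℝ)/2)) / Real.log ((1-δ^2)/(2*γ^2))⌉₊) * (β * s/η)
      ≤ (Real.sqrt (π/8) * η / s)^2 := by
  have hπ := Real.pi_pos
  have hs0 : (0:ℝ) < s := by exact_mod_cast hs
  have h1δ : 0 < 1 - δ^2 := by nlinarith
  have h2γ : 0 < 2*γ^2 := by positivity
  set ρ : ℝ := (2*γ^2)/(1-δ^2) with hρ
  have hρ0 : 0 < ρ := by positivity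
  have hρ1 : ρ < 1 := by rw [hρ, div_lt_one h1δ]; nlinarith
  set arg : ℝ := Real.sqrt β * Real.sqrt (8/π) * ((s:ℝ)/η) ^ ((3:ℝ)/2) with harg
  have hsη : (0:ℝ) < (s:ℝ)/η := by positivity
  have harg0 : 0 < arg := by
    rw [harg]
    have h1 : 0 < Real.sqrt β := Real.sqrt_pos.2 hβ2
    have h2 : 0 < Real.sqrt (8/π) := Real.sqrt_pos.2 (by positivity)
    have h3 : 0 < ((s:ℝ)/η) ^ ((3:ℝ)/2) := Real.rpow_pos_of_pos hsη _
    positivity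
  set a : ℝ := Real.sqrt (π/8) * η / s with ha
  have ha0 : 0 < a := by
    rw [ha]
    have : 0 < Real.sqrt (π/8) := Real.sqrt_pos.2 (by positivity)
    positivity
  have hargsq : arg^2 * a^2 = β * s/η := by
    rw [harg, ha]
    have h1 : (((s:ℝ)/η) ^ ((3:ℝ)/2))^2 = ((s:ℝ)/η)^(3:ℕ) := by
      rw [← Real.rpow_natCast (((s:ℝ)/η) ^ ((3:ℝ)/2)) 2, ← Real.rpow_mul hsη.le,
        ← Real.rpow_natCast ((s:ℝ)/η) 3]
      norm_num
    rw [mul_pow, mul_pow, h1, Real.sq_sqrt hβ2.le, Real.sq_sqrt (by positivity : (0:ℝ) ≤ 8/π)]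
    rw [div_pow, div_pow, mul_pow, Real.sq_sqrt (by positivity : (0:ℝ) ≤ π/8)]
    field_simp
  set K : ℕ := ⌈2 * Real.log arg / Real.log ((1-δ^2)/(2*γ^2))⌉₊ with hK
  have hinv : (1-δ^2)/(2*γ^2) = ρ⁻¹ := by rw [hρ]; rw [inv_div]
  have hloginv : 0 < Real.log ρ⁻¹ := Real.log_pos (by
    rw [lt_inv_comm₀ (by norm_num) hρ0]; simpa using hρ1)
  have hmain : ρ^K ≤ (arg^2)⁻¹ := by
    rcases le_or_gt (Real.log arg) 0 with hla | hla
    · have harg1 : arg ≤ 1 := by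
        by_contra hgt
        push_neg at hgt
        exact absurd (Real.log_pos hgt) (not_lt.2 hla)
      have h1 : ρ^K ≤ 1 := pow_le_one₀ hρ0.le hρ1.le
      have h2 : arg^2 ≤ 1 := by nlinarith
      have h4 : 0 < arg^2 := by positivity
      have h3 : (1:ℝ) ≤ (arg^2)⁻¹ := by
        rw [le_inv_comm₀ one_pos h4]
        simpa using h2
      linarith
    · have hc0 : 0 ≤ 2 * Real.log arg / Real.log ((1-δ^2)/(2*γ^2)) := by
        rw [hinv]
        positivity
      have hKge : 2 * Real.log arg / Real.log ((1-δ^2)/(2*γ^2)) ≤ (K:ℝ) := Nat.le_ceil _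
      rw [hinv] at hKge
      have hKlog : (K:ℝ) * Real.log ρ ≤ -(2 * Real.log arg) := by
        have hlogρ : Real.log ρ = -Real.log ρ⁻¹ := by rw [Real.log_inv]; ring
        rw [hlogρ]
        have := mul_le_mul_of_nonneg_right hKge hloginv.le
        rw [div_mul_cancel₀ _ hloginv.ne'] at this
        linarith
      have hexp : ρ^K = Real.exp ((K:ℝ) * Real.log ρ) := by
        rw [← Real.log_pow, Real.exp_log (by positivity)]
      have h2 : Real.exp ((K:ℝ) * Real.log ρ) ≤ Real.exp (-(2*Real.log arg)) :=
        Real.exp_le_exp.2 hKlog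
      have h3 : Real.exp (-(2*Real.log arg)) = (arg^2)⁻¹ := by
        rw [Real.exp_neg]
        congr 1
        rw [two_mul, Real.exp_add, Real.exp_log harg0]
        ring
      rw [hexp]
      exact h3 ▸ h2
  calc ρ^K * (β * s/η) = ρ^K * (arg^2 * a^2) := by rw [hargsq]
    _ ≤ (arg^2)⁻¹ * (arg^2 * a^2) := mul_le_mul_of_nonneg_right hmain (by positivity)
    _ = a^2 := by field_simp

lemma pdf_mul_exp (t : ℝ) : gaussianPDFReal 0 1 t * Real.exp ((1/4)*t^2)
    = (Real.sqrt (2*π))⁻¹ * Real.exp (-(1/4)*t^2) := by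
  rw [gaussianPDFReal]
  simp only [NNReal.coe_one, mul_one, sub_zero]
  rw [mul_assoc, ← Real.exp_add]
  congr 2
  ring

lemma pdf_le (t : ℝ) : gaussianPDFReal 0 1 t ≤ (Real.sqrt (2*π))⁻¹ := by
  rw [gaussianPDFReal]
  simp only [NNReal.coe_one, mul_one, sub_zero]
  have h1 : Real.exp (-t^2/2) ≤ 1 := by
    rw [Real.exp_le_one_iff]
    nlinarith [sq_nonneg t]
  have h2 : (0:ℝ) ≤ (Real.sqrt (2*π))⁻¹ := by positivity
  nlinarith

lemma gaussian_as_density : gaussianReal 0 1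
    = volume.withDensity (fun t => ((gaussianPDFReal 0 1 t).toNNReal : ENNReal)) := by
  rw [gaussianReal_of_var_ne_zero _ one_ne_zero]
  congr 1

lemma gauss_small {Ω : Type*} [MeasureSpace Ω] [IsProbabilityMeasure (ℙ : Measure Ω)]
    {X : Ω → ℝ} (hm : Measurable X) (hmap : Measure.map X ℙ = gaussianReal 0 1)
    {a : ℝ} (ha : 0 ≤ a) :
    ℙ {ω | |X ω| < a} ≤ ENNReal.ofReal (2 * a / Real.sqrt (2*π)) := by
  have hset : {ω | |X ω| < a} = X ⁻¹' (Set.Ioo (-a) a) := by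
    ext ω; simp [abs_lt, Set.mem_Ioo]
  rw [hset, ← Measure.map_apply hm measurableSet_Ioo, hmap,
    gaussianReal_apply_eq_integral 0 one_ne_zero _]
  apply ENNReal.ofReal_le_ofReal
  have hintpdf : IntegrableOn (gaussianPDFReal 0 1) (Set.Ioo (-a) a) volume :=
    (integrable_gaussianPDFReal 0 1).integrableOn
  have hintc : IntegrableOn (fun _ : ℝ => (Real.sqrt (2*π))⁻¹) (Set.Ioo (-a) a) volume := by
    exact integrableOn_const (by rw [Real.volume_Ioo]; exact ENNReal.ofReal_ne_top)
  calc ∫ t in Set.Ioo (-a) a, gaussianPDFReal 0 1 t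
      ≤ ∫ _ in Set.Ioo (-a) a, (Real.sqrt (2*π))⁻¹ :=
        setIntegral_mono_on hintpdf hintc measurableSet_Ioo (fun t _ => pdf_le t)
    _ = (volume (Set.Ioo (-a) a)).toReal * (Real.sqrt (2*π))⁻¹ := by
        rw [setIntegral_const]; rfl
    _ ≤ 2 * a / Real.sqrt (2*π) := by
        rw [Real.volume_Ioo, ENNReal.toReal_ofReal (by linarith)]
        rw [div_eq_mul_inv]
        have : a - -a = 2*a := by ring
        rw [this]
    _ = 2 * a / Real.sqrt (2*π) := rfl

lemma heq_aux : (fun t => (gaussianPDFReal 0 1 t).toNNReal • Real.exp ((1/4)*t^2))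
    = fun t => (Real.sqrt (2*π))⁻¹ * Real.exp (-(1/4)*t^2) := by
  funext t
  rw [NNReal.smul_def, smul_eq_mul]
  have h1 : ((gaussianPDFReal 0 1 t).toNNReal : ℝ) = gaussianPDFReal 0 1 t :=
    Real.coe_toNNReal _ (gaussianPDFReal_nonneg 0 1 t)
  rw [h1, pdf_mul_exp]

lemma integrable_exp_quarter : Integrable (fun t => Real.exp ((1/4)*t^2)) (gaussianReal 0 1) := by
  rw [gaussian_as_density,
    integrable_withDensity_iff_integrable_smul ((measurable_gaussianPDFReal 0 1).real_toNNReal)]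
  rw [heq_aux]
  exact (integrable_exp_neg_mul_sq (by norm_num : (0:ℝ) < 1/4)).const_mul _

lemma integral_exp_quarter :
    ∫ t, Real.exp ((1/4)*t^2) ∂(gaussianReal 0 1) = Real.sqrt 2 := by
  rw [gaussian_as_density,
    integral_withDensity_eq_integral_smul ((measurable_gaussianPDFReal 0 1).real_toNNReal)]
  rw [show (fun t => (gaussianPDFReal 0 1 t).toNNReal • Real.exp ((1/4)*t^2))
      = fun t => (Real.sqrt (2*π))⁻¹ * Real.exp (-(1/4)*t^2) from heq_aux]
  rw [MeasureTheory.integral_const_mul, integral_gaussian (1/4)]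
  rw [show π/(1/4) = 2*(2*π) from by ring, Real.sqrt_mul (by norm_num) (2*π)]
  have hne : Real.sqrt (2*π) ≠ 0 := by positivity
  field_simp

lemma chernoff {Ω : Type*} [MeasureSpace Ω] [IsProbabilityMeasure (ℙ : Measure Ω)]
    {N : ℕ} (S : Finset (Fin N)) (x : Ω → Fin N → ℝ)
    (hmeas : ∀ i, Measurable (fun ω => x ω i))
    (hgauss : ∀ i ∈ S, Measure.map (fun ω => x ω i) ℙ = gaussianReal 0 1)
    (hindep : iIndepFun (fun (i : S) ω => x ω i.val) ℙ)
    (b : ℝ) :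
    (ℙ {ω | b ≤ ∑ i : S, (x ω i.val)^2}).toReal
      ≤ Real.exp (-b/4) * (Real.sqrt 2)^(S.card) := by
  classical
  set X : S → Ω → ℝ := fun i ω => (x ω i.val)^2 with hX
  have hXm : ∀ i : S, Measurable (X i) := fun i => (hmeas i.val).pow_const 2
  have hind2 : iIndepFun X ℙ := by
    have := hindep.comp (fun _ => fun t : ℝ => t^2) (fun _ => measurable_id.pow_const 2)
    exact this
  have hintexp : ∀ i : S, Integrable (fun ω => Real.exp ((1/4) * X i ω)) ℙ := by
    intro i
    have h1 : Integrable (fun t => Real.exp ((1/4)*t^2))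
        (Measure.map (fun ω => x ω i.val) ℙ) := by
      rw [hgauss i.val i.2]; exact integrable_exp_quarter
    have h2 := (integrable_map_measure h1.aestronglyMeasurable
      (hmeas i.val).aemeasurable).1 h1
    exact h2
  have hmgf : ∀ i : S, mgf (X i) ℙ (1/4) = Real.sqrt 2 := by
    intro i
    have hsm : AEStronglyMeasurable (fun t => Real.exp ((1/4)*t^2))
        (Measure.map (fun ω => x ω i.val) ℙ) := by
      rw [hgauss i.val i.2]
      exact integrable_exp_quarter.aestronglyMeasurable
    have h1 : ∫ t, Real.exp ((1/4)*t^2) ∂(Measure.map (fun ω => x ω i.val) ℙ)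
        = ∫ ω, Real.exp ((1/4) * (x ω i.val)^2) ∂ℙ :=
      integral_map (hmeas i.val).aemeasurable hsm
    rw [mgf]
    show ∫ ω, Real.exp ((1/4) * (x ω i.val)^2) ∂ℙ = Real.sqrt 2
    rw [← h1, hgauss i.val i.2, integral_exp_quarter]
  have hset : {ω | b ≤ ∑ i : S, (x ω i.val)^2}
      = {ω | b ≤ (∑ i : S, X i) ω} := by
    ext ω
    simp only [Set.mem_setOf_eq, Finset.sum_apply]
    rfl
  rw [hset]
  have hcher := measure_ge_le_exp_mul_mgf (X := ∑ i : S, X i) (μ := ℙ) b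
    (by norm_num : (0:ℝ) ≤ 1/4)
    (hind2.integrable_exp_mul_sum hXm (fun i _ => hintexp i))
  calc (ℙ {ω | b ≤ (∑ i : S, X i) ω}).toReal
      ≤ Real.exp (-(1/4) * b) * mgf (∑ i : S, X i) ℙ (1/4) := hcher
    _ = Real.exp (-(1/4)*b) * ∏ i : S, mgf (X i) ℙ (1/4) := by
        rw [hind2.mgf_sum hXm]
    _ = Real.exp (-b/4) * (Real.sqrt 2)^(S.card) := by
        rw [Finset.prod_congr rfl (fun i _ => hmgf i), Finset.prod_const]
        congr 1
        · ring_nf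
        · rw [Finset.card_univ, Fintype.card_coe]

lemma sqrt2_exp : Real.sqrt 2 ≤ Real.exp (1/2) := by
  have h2e : (2:ℝ) < Real.exp 1 := by
    have := Real.exp_one_gt_d9
    linarith
  have ha2 : Real.sqrt 2 ^ 2 = 2 := Real.sq_sqrt (by norm_num)
  have hb2 : Real.exp (1/2) * Real.exp (1/2) = Real.exp 1 := by
    rw [← Real.exp_add]; norm_num
  have h0 : 0 ≤ Real.sqrt 2 := Real.sqrt_nonneg 2
  have h1 : 0 < Real.exp (1/2) := Real.exp_pos _
  nlinarith

lemma tail_bound {η b : ℝ} {s : ℕ} (hη : 0 < η) (hη1 : η < 1)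
    (hb : 2*s - 4*Real.log (η/2) ≤ b) :
    Real.exp (-b/4) * (Real.sqrt 2)^s ≤ η/2 := by
  have hη2 : (0:ℝ) < η/2 := by linarith
  have h1 : Real.exp (-b/4) ≤ Real.exp (-(s:ℝ)/2) * (η/2) := by
    rw [← Real.exp_log hη2, ← Real.exp_add]
    apply Real.exp_le_exp.2
    linarith
  have h2 : Real.exp (-(s:ℝ)/2) * (Real.sqrt 2)^s ≤ 1 := by
    have he : Real.exp (-(s:ℝ)/2) = (Real.exp (-(1:ℝ)/2))^s := by
      rw [← Real.exp_nat_mul]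
      congr 1
      ring
    rw [he, ← mul_pow]
    apply pow_le_one₀
    · positivity
    · have h3 : Real.exp (-(1:ℝ)/2) * Real.exp (1/2) = 1 := by
        rw [← Real.exp_add]; norm_num
      have h4 := Real.exp_pos (-(1:ℝ)/2)
      nlinarith [sqrt2_exp, Real.sqrt_nonneg 2]
  have h5 : (0:ℝ) ≤ (Real.sqrt 2)^s := by positivity
  calc Real.exp (-b/4) * (Real.sqrt 2)^s
      ≤ (Real.exp (-(s:ℝ)/2) * (η/2)) * (Real.sqrt 2)^s :=
        mul_le_mul_of_nonneg_right h1 h5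
    _ = (Real.exp (-(s:ℝ)/2) * (Real.sqrt 2)^s) * (η/2) := by ring
    _ ≤ 1 * (η/2) := mul_le_mul_of_nonneg_right h2 hη2.le
    _ = η/2 := by ring

lemma two_a_div (η : ℝ) (s : ℕ) (hη : 0 < η) (hs : 0 < s) :
    2 * (Real.sqrt (π/8) * η / s) / Real.sqrt (2*π) = η/(2*s) := by
  have hπ := Real.pi_pos
  have hs0 : (0:ℝ) < s := by exact_mod_cast hs
  have hq : Real.sqrt (π/8) / Real.sqrt (2*π) = 1/4 := by
    rw [← Real.sqrt_div (by positivity : (0:ℝ) ≤ π/8)]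
    rw [show (π/8)/(2*π) = ((1:ℝ)/4)^2 from by field_simp; ring]
    exact Real.sqrt_sq (by norm_num)
  have key : 2 * (Real.sqrt (π/8) * η / s) / Real.sqrt (2*π)
      = (Real.sqrt (π/8) / Real.sqrt (2*π)) * (2*η/s) := by ring
  rw [key, hq]
  field_simp
  ring

end S15

open S15 in

/-- high-probability logarithmic iteration count for Gaussian signals. -/
theorem stmt15 {M N : ℕ} (A : Matrix (Fin M) (Fin N) ℝ) (hpd : (A * Aᵀ).PosDef)
    (s : ℕ) (hs : 0 < s)
    (δ2s γ3s : ℝ) (h0δ : 0 ≤ δ2s) (h0γ : 0 < γ3s)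
    (h2 : IsRIP A (2 * s) δ2s)
    (h3 : ∀ z : Fin N → ℝ, Sparse (3 * s) z →
      (1 - γ3s) * nsq z ≤ nsq ((hpd.inv.posSemidef.sqrt * A).mulVec z))
    (hcond : δ2s ^ 2 + 2 * γ3s ^ 2 < 1)
    {Ω : Type*} [MeasureSpace Ω] [IsProbabilityMeasure (ℙ : Measure Ω)]
    (S : Finset (Fin N)) (hcard : S.card = s)
    (x : Ω → Fin N → ℝ) (hmeas : ∀ i, Measurable (fun ω => x ω i))
    (hsupp : ∀ ω, ∀ i ∉ S, x ω i = 0)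
    (hgauss : ∀ i ∈ S, Measure.map (fun ω => x ω i) ℙ = gaussianReal 0 1)
    (hindep : iIndepFun (fun (i : S) ω => x ω i.val) ℙ)
    (T : Ω → ℕ → Finset (Fin N)) (xs μ : Ω → ℕ → Fin N → ℝ)
    (hspec : ∀ ω, NSTSpec A (A.mulVec (x ω)) s (T ω) (xs ω) (μ ω))
    (hμ0 : ∀ ω, μ ω 0 = 0)
    (η β : ℝ) (hη : 0 < η) (hη1 : η < 1)
    (hβ : β > 2 * η - 4 * η / s * Real.log (η / 2)) :
    1 - η ≤ (ℙ {ω |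
      Real.sqrt (Real.pi / 8) * η / s ≤ hatAbs (x ω) s ∧
      nsq (x ω) ≤ β * s / η ∧
      ∃ k : ℕ, k ≤ ⌈2 * Real.log (Real.sqrt β * Real.sqrt (8 / Real.pi) *
            ((s : ℝ) / η) ^ ((3 : ℝ) / 2)) /
          Real.log ((1 - δ2s ^ 2) / (2 * γ3s ^ 2))⌉₊ ∧
        μ ω k = x ω}).toReal := by

  classical
  have hπ := Real.pi_pos
  have hs0 : (0:ℝ) < s := by exact_mod_cast hs
  have hδsq : δ2s^2 < 1 := by nlinarith
  have hlogη : Real.log (η/2) < 0 := Real.log_neg (by linarith) (by linarith)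
  have hβpos : 0 < β := by
    have h1 : 0 < 4*η/s := by positivity
    nlinarith
  set a : ℝ := Real.sqrt (π/8) * η / s with ha
  set b : ℝ := β * s / η with hb
  have ha0 : 0 < a := by
    rw [ha]
    have : 0 < Real.sqrt (π/8) := Real.sqrt_pos.2 (by positivity)
    positivity
  have hb0 : 0 < b := by rw [hb]; positivity
  have hb2s : 2*(s:ℝ) - 4*Real.log (η/2) ≤ b := by
    rw [hb]
    have h1 : 0 < (s:ℝ)/η := by positivity
    calc 2*(s:ℝ) - 4*Real.log (η/2)
        = (2*η - 4*η/s*Real.log (η/2)) * ((s:ℝ)/η) := by field_simp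
      _ ≤ β * ((s:ℝ)/η) := mul_le_mul_of_nonneg_right (le_of_lt hβ) h1.le
      _ = β * s / η := by ring
  -- events
  set E1 : Set Ω := ⋂ i ∈ S, {ω | a ≤ |x ω i|} with hE1
  set E2 : Set Ω := {ω | (∑ i : S, (x ω i.val)^2) < b} with hE2
  have hmE1 : MeasurableSet E1 :=
    MeasurableSet.biInter (Set.to_countable _)
      (fun i _ => measurableSet_le measurable_const (hmeas i).abs)
  have hmE2 : MeasurableSet E2 :=
    measurableSet_lt (Finset.measurable_sum Finset.univ
      (fun i _ => (hmeas i.val).pow_const 2)) measurable_const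
  -- tail bound 1
  have hPE1 : ℙ E1ᶜ ≤ ENNReal.ofReal (η/2) := by
    have hcompl : E1ᶜ = ⋃ i ∈ S, {ω | |x ω i| < a} := by
      rw [hE1, Set.compl_iInter₂]
      refine Set.iUnion₂_congr fun i _ => ?_
      ext ω
      simp [not_le]
    rw [hcompl]
    calc ℙ (⋃ i ∈ S, {ω | |x ω i| < a}) ≤ ∑ i ∈ S, ℙ {ω | |x ω i| < a} :=
        measure_biUnion_finset_le S _
      _ ≤ ∑ _i ∈ S, ENNReal.ofReal (η/(2*s)) := by
          refine Finset.sum_le_sum fun i hi => ?_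
          have := gauss_small (hmeas i) (hgauss i hi) ha0.le
          rwa [show 2 * a / Real.sqrt (2*π) = η/(2*s) from two_a_div η s hη hs] at this
      _ = ENNReal.ofReal (η/2) := by
          rw [Finset.sum_const, hcard, nsmul_eq_mul]
          rw [← ENNReal.ofReal_natCast s, ← ENNReal.ofReal_mul (by positivity)]
          congr 1
          field_simp
  -- tail bound 2
  have hPE2 : ℙ E2ᶜ ≤ ENNReal.ofReal (η/2) := by
    have hcompl : E2ᶜ = {ω | b ≤ ∑ i : S, (x ω i.val)^2} := by
      rw [hE2]
      ext ω
      simp [not_lt]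
    rw [hcompl]
    have h1 := chernoff S x hmeas hgauss hindep b
    rw [hcard] at h1
    have h2 : (ℙ {ω | b ≤ ∑ i : S, (x ω i.val)^2}).toReal ≤ η/2 :=
      le_trans h1 (tail_bound hη hη1 hb2s)
    calc ℙ {ω | b ≤ ∑ i : S, (x ω i.val)^2}
        = ENNReal.ofReal ((ℙ {ω | b ≤ ∑ i : S, (x ω i.val)^2}).toReal) :=
          (ENNReal.ofReal_toReal (measure_ne_top _ _)).symm
      _ ≤ ENNReal.ofReal (η/2) := ENNReal.ofReal_le_ofReal h2
  -- combine
  have hPE : 1 - η ≤ (ℙ (E1 ∩ E2)).toReal := by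
    have hcc : ℙ (E1 ∩ E2)ᶜ ≤ ENNReal.ofReal η := by
      calc ℙ (E1 ∩ E2)ᶜ = ℙ (E1ᶜ ∪ E2ᶜ) := by rw [Set.compl_inter]
        _ ≤ ℙ E1ᶜ + ℙ E2ᶜ := measure_union_le _ _
        _ ≤ ENNReal.ofReal (η/2) + ENNReal.ofReal (η/2) := add_le_add hPE1 hPE2
        _ = ENNReal.ofReal η := by
            rw [← ENNReal.ofReal_add (by linarith) (by linarith)]
            congr 1
            ring
    have h1 : (ℙ (E1 ∩ E2)ᶜ).toReal ≤ η :=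
      ENNReal.toReal_le_of_le_ofReal hη.le hcc
    have h2 : (ℙ (E1 ∩ E2)).toReal + (ℙ (E1 ∩ E2)ᶜ).toReal = 1 := by
      rw [← ENNReal.toReal_add (measure_ne_top _ _) (measure_ne_top _ _)]
      rw [measure_add_measure_compl (hmE1.inter hmE2)]
      simp
    linarith
  -- inclusion
  have hsub : E1 ∩ E2 ⊆ {ω |
      Real.sqrt (Real.pi / 8) * η / s ≤ hatAbs (x ω) s ∧
      nsq (x ω) ≤ β * s / η ∧
      ∃ k : ℕ, k ≤ ⌈2 * Real.log (Real.sqrt β * Real.sqrt (8 / Real.pi) *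
            ((s : ℝ) / η) ^ ((3 : ℝ) / 2)) /
          Real.log ((1 - δ2s ^ 2) / (2 * γ3s ^ 2))⌉₊ ∧
        μ ω k = x ω} := by
    rintro ω ⟨hw1, hw2⟩
    have hax : ∀ i ∈ S, a ≤ |x ω i| := by
      intro i hi
      have := Set.mem_iInter₂.1 hw1 i hi
      exact this
    have hY : nsq (x ω) = ∑ i : S, (x ω i.val)^2 := by
      rw [nsq_sum_subset (hsupp ω), ← Finset.sum_coe_sort S (fun i => x ω i ^ 2)]
    have hxb : nsq (x ω) < b := by
      rw [hY]
      exact hw2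
    refine ⟨?_, ?_, ?_⟩
    · -- hatAbs
      apply hatAbs_ge hs
      · calc s = S.card := hcard.symm
          _ ≤ Fintype.card (Fin N) := Finset.card_le_univ S
          _ = N := Fintype.card_fin N
      · calc s = S.card := hcard.symm
          _ ≤ (Finset.univ.filter (fun i => a ≤ |x ω i|)).card := by
              apply Finset.card_le_card
              intro i hi
              rw [Finset.mem_filter]
              exact ⟨Finset.mem_univ i, hax i hi⟩
    · rw [← hb]
      exact hxb.le
    · refine ⟨⌈2 * Real.log (Real.sqrt β * Real.sqrt (8 / Real.pi) *
            ((s : ℝ) / η) ^ ((3 : ℝ) / 2)) /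
          Real.log ((1 - δ2s ^ 2) / (2 * γ3s ^ 2))⌉₊, le_refl _, ?_⟩
      exact recovery hpd h2 h0δ hδsq h3 h0γ hcard (hsupp ω) (hspec ω) ha0 hax hxb
        (Kpow_le hs hη hβpos h0δ h0γ hcond)
  calc 1 - η ≤ (ℙ (E1 ∩ E2)).toReal := hPE
    _ ≤ _ := ENNReal.toReal_mono (measure_ne_top _ _) (measure_mono hsub)
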